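/- arXiv:2110.14818 — 10 statements merged into one kernel-verified Lean document; each statement's English description precedes it below -/
import Mathlib

section
/- Let S and A be finite nonempty sets, let p : S × A × S → ℝ be a transition kernel satisfying p(s'|s,a) ≥ 0 and ∑_{s'∈S} p(s'|s,a) = 1 for all (s,a), let r : S × A → ℝ be an expected-reward function, let γ ∈ [0,1) be a discount factor, let π₀ : S × A → ℝ satisfy π₀(a|s) > 0 for all a and ∑_{a∈A} π₀(a|s) = 1 for every s, and let w > 0. Define the soft Bellman operator B_w on functions Q : S × A → ℝ by B_w[Q](s,a) = r(s,a) + γ · ∑_{s'∈S} p(s'|s,a) · w·log(∑_{a'∈A} π₀(a'|s')·exp(Q(s',a')/w)). Then for any two functions Q₁, Q₂ : S × A → ℝ, max_{(s,a)∈S×A} |B_w[Q₁](s,a) − B_w[Q₂](s,a)| ≤ γ · max_{(s,a)∈S×A} |Q₁(s,a) − Q₂(s,a)|. -/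
/-- The soft (mellowmax) Bellman operator with transition kernel `p`, reward `r`,
discount `γ`, prior `π₀` and temperature `w`. -/
noncomputable def softBellman {S A : Type*} [Fintype S] [Fintype A]
    (p : S → A → S → ℝ) (r : S → A → ℝ) (γ : ℝ) (π₀ : S → A → ℝ) (w : ℝ)
    (Q : S → A → ℝ) : S → A → ℝ :=
  fun s a => r s a +
    γ * ∑ s', p s a s' * (w * Real.log (∑ a', π₀ s' a' * Real.exp (Q s' a' / w)))

lemma mm_diff_le {S A : Type*} [Fintype S] [Fintype A] [Nonempty A]
    (π₀ : S → A → ℝ) (hπpos : ∀ s a, 0 < π₀ s a)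
    (w : ℝ) (hw : 0 < w) (Q₁ Q₂ : S → A → ℝ) (M : ℝ)
    (hM : ∀ s a, Q₁ s a - Q₂ s a ≤ M) (s : S) :
    w * Real.log (∑ a', π₀ s a' * Real.exp (Q₁ s a' / w)) -
      w * Real.log (∑ a', π₀ s a' * Real.exp (Q₂ s a' / w)) ≤ M := by
  have hpos1 : 0 < ∑ a', π₀ s a' * Real.exp (Q₁ s a' / w) :=
    Finset.sum_pos (fun a _ => mul_pos (hπpos s a) (Real.exp_pos _)) Finset.univ_nonempty
  have hpos2 : 0 < ∑ a', π₀ s a' * Real.exp (Q₂ s a' / w) :=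
    Finset.sum_pos (fun a _ => mul_pos (hπpos s a) (Real.exp_pos _)) Finset.univ_nonempty
  have hle : (∑ a', π₀ s a' * Real.exp (Q₁ s a' / w)) ≤
      Real.exp (M / w) * ∑ a', π₀ s a' * Real.exp (Q₂ s a' / w) := by
    rw [Finset.mul_sum]
    apply Finset.sum_le_sum
    intro a _
    rw [mul_left_comm]
    apply mul_le_mul_of_nonneg_left _ (hπpos s a).le
    rw [← Real.exp_add]
    apply Real.exp_le_exp.2
    rw [← add_div, div_le_div_iff_of_pos_right hw]
    linarith [hM s a]
  have := Real.log_le_log hpos1 hle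
  rw [Real.log_mul (Real.exp_pos _).ne' hpos2.ne', Real.log_exp] at this
  have h2 : w * Real.log (∑ a', π₀ s a' * Real.exp (Q₁ s a' / w)) ≤
      w * (M / w + Real.log (∑ a', π₀ s a' * Real.exp (Q₂ s a' / w))) :=
    mul_le_mul_of_nonneg_left this hw.le
  rw [mul_add, mul_div_cancel₀ _ hw.ne'] at h2
  linarith

/-- The soft Bellman operator is a γ-contraction in the sup norm. -/
theorem softBellman_contraction
    {S A : Type*} [Fintype S] [Fintype A] [Nonempty S] [Nonempty A]
    (p : S → A → S → ℝ) (hp_nonneg : ∀ s a s', 0 ≤ p s a s')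
    (hp_sum : ∀ s a, ∑ s', p s a s' = 1)
    (r : S → A → ℝ) (γ : ℝ) (hγ0 : 0 ≤ γ) (hγ1 : γ < 1)
    (π₀ : S → A → ℝ) (hπpos : ∀ s a, 0 < π₀ s a) (hπsum : ∀ s, ∑ a, π₀ s a = 1)
    (w : ℝ) (hw : 0 < w) (Q₁ Q₂ : S → A → ℝ) :
    Finset.univ.sup' Finset.univ_nonempty
        (fun sa : S × A =>
          |softBellman p r γ π₀ w Q₁ sa.1 sa.2 - softBellman p r γ π₀ w Q₂ sa.1 sa.2|) ≤
    γ * Finset.univ.sup' Finset.univ_nonempty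
        (fun sa : S × A => |Q₁ sa.1 sa.2 - Q₂ sa.1 sa.2|) := by
  set M := Finset.univ.sup' Finset.univ_nonempty
      (fun sa : S × A => |Q₁ sa.1 sa.2 - Q₂ sa.1 sa.2|) with hMdef
  have hMb : ∀ s a, |Q₁ s a - Q₂ s a| ≤ M := fun s a =>
    Finset.le_sup' (fun sa : S × A => |Q₁ sa.1 sa.2 - Q₂ sa.1 sa.2|)
      (Finset.mem_univ (s, a))
  have hmm : ∀ s, |w * Real.log (∑ a', π₀ s a' * Real.exp (Q₁ s a' / w)) -
      w * Real.log (∑ a', π₀ s a' * Real.exp (Q₂ s a' / w))| ≤ M := by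
    intro s
    rw [abs_le]
    constructor
    · have := mm_diff_le π₀ hπpos w hw Q₂ Q₁ M
        (fun s a => by have := hMb s a; rw [abs_le] at this; linarith [this.1]) s
      linarith
    · exact mm_diff_le π₀ hπpos w hw Q₁ Q₂ M
        (fun s a => by have := hMb s a; rw [abs_le] at this; linarith [this.2]) s
  apply Finset.sup'_le
  intro sa _
  obtain ⟨s, a⟩ := sa
  simp only [softBellman]
  have key : |(r s a + γ * ∑ s', p s a s' *
        (w * Real.log (∑ a', π₀ s' a' * Real.exp (Q₁ s' a' / w)))) -
      (r s a + γ * ∑ s', p s a s' *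
        (w * Real.log (∑ a', π₀ s' a' * Real.exp (Q₂ s' a' / w))))| =
      γ * |∑ s', p s a s' *
        ((w * Real.log (∑ a', π₀ s' a' * Real.exp (Q₁ s' a' / w))) -
         (w * Real.log (∑ a', π₀ s' a' * Real.exp (Q₂ s' a' / w))))| := by
    have hsum : (∑ s', p s a s' *
          (w * Real.log (∑ a', π₀ s' a' * Real.exp (Q₁ s' a' / w)))) -
        (∑ s', p s a s' *
          (w * Real.log (∑ a', π₀ s' a' * Real.exp (Q₂ s' a' / w)))) =
        ∑ s', p s a s' *
          ((w * Real.log (∑ a', π₀ s' a' * Real.exp (Q₁ s' a' / w))) -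
           (w * Real.log (∑ a', π₀ s' a' * Real.exp (Q₂ s' a' / w)))) := by
      rw [← Finset.sum_sub_distrib]
      exact Finset.sum_congr rfl fun x _ => (mul_sub _ _ _).symm
    rw [show (r s a + γ * ∑ s', p s a s' *
          (w * Real.log (∑ a', π₀ s' a' * Real.exp (Q₁ s' a' / w)))) -
        (r s a + γ * ∑ s', p s a s' *
          (w * Real.log (∑ a', π₀ s' a' * Real.exp (Q₂ s' a' / w)))) =
        γ * ((∑ s', p s a s' *
          (w * Real.log (∑ a', π₀ s' a' * Real.exp (Q₁ s' a' / w)))) -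
        (∑ s', p s a s' *
          (w * Real.log (∑ a', π₀ s' a' * Real.exp (Q₂ s' a' / w))))) from by ring,
      hsum, abs_mul, abs_of_nonneg hγ0]
  rw [key]
  apply mul_le_mul_of_nonneg_left _ hγ0
  calc |∑ s', p s a s' * _| ≤ ∑ s', |p s a s' *
        ((w * Real.log (∑ a', π₀ s' a' * Real.exp (Q₁ s' a' / w))) -
         (w * Real.log (∑ a', π₀ s' a' * Real.exp (Q₂ s' a' / w))))| :=
        Finset.abs_sum_le_sum_abs _ _
    _ ≤ ∑ s', p s a s' * M := by
        apply Finset.sum_le_sum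
        intro s' _
        rw [abs_mul, abs_of_nonneg (hp_nonneg s a s')]
        exact mul_le_mul_of_nonneg_left (hmm s') (hp_nonneg s a s')
    _ = M := by rw [← Finset.sum_mul, hp_sum, one_mul]
end

section
/- Let A be a finite nonempty set, let π₀ : A → ℝ satisfy π₀(a) > 0 for all a ∈ A and ∑_{a∈A} π₀(a) = 1, and let w > 0. Then for any two functions Q₁, Q₂ : A → ℝ, |w·log(∑_{a∈A} π₀(a)·exp(Q₁(a)/w)) − w·log(∑_{a∈A} π₀(a)·exp(Q₂(a)/w))| ≤ max_{a∈A} |Q₁(a) − Q₂(a)|, i.e., the mellowmax operator is non-expansive in the sup norm. -/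
lemma mellowmax_aux
    {A : Type*} [Fintype A] [Nonempty A]
    (π₀ : A → ℝ) (hπpos : ∀ a, 0 < π₀ a)
    (w : ℝ) (hw : 0 < w) (Q₁ Q₂ : A → ℝ) (M : ℝ)
    (hM : ∀ a, Q₁ a - Q₂ a ≤ M) :
    w * Real.log (∑ a, π₀ a * Real.exp (Q₁ a / w)) -
      w * Real.log (∑ a, π₀ a * Real.exp (Q₂ a / w)) ≤ M := by
  have hS₂ : 0 < ∑ a, π₀ a * Real.exp (Q₂ a / w) :=
    Finset.sum_pos (fun a _ => mul_pos (hπpos a) (Real.exp_pos _)) Finset.univ_nonempty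
  have hS₁ : 0 < ∑ a, π₀ a * Real.exp (Q₁ a / w) :=
    Finset.sum_pos (fun a _ => mul_pos (hπpos a) (Real.exp_pos _)) Finset.univ_nonempty
  have hle : (∑ a, π₀ a * Real.exp (Q₁ a / w)) ≤
      Real.exp (M / w) * ∑ a, π₀ a * Real.exp (Q₂ a / w) := by
    rw [Finset.mul_sum]
    apply Finset.sum_le_sum
    intro a _
    rw [mul_comm (Real.exp (M / w)), mul_assoc, ← Real.exp_add]
    apply mul_le_mul_of_nonneg_left _ (hπpos a).le
    apply Real.exp_le_exp.2
    rw [← add_div, div_le_div_iff_of_pos_right hw]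
    linarith [hM a]
  have hlog : Real.log (∑ a, π₀ a * Real.exp (Q₁ a / w)) ≤
      M / w + Real.log (∑ a, π₀ a * Real.exp (Q₂ a / w)) := by
    calc Real.log (∑ a, π₀ a * Real.exp (Q₁ a / w))
        ≤ Real.log (Real.exp (M / w) * ∑ a, π₀ a * Real.exp (Q₂ a / w)) :=
          Real.log_le_log hS₁ hle
      _ = M / w + Real.log (∑ a, π₀ a * Real.exp (Q₂ a / w)) := by
          rw [Real.log_mul (Real.exp_ne_zero _) hS₂.ne', Real.log_exp]
  have := mul_le_mul_of_nonneg_left hlog hw.le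
  rw [mul_add, mul_div_cancel₀ _ hw.ne'] at this
  linarith

/-- The mellowmax operator is non-expansive in the sup norm. -/
theorem mellowmax_nonexpansive
    {A : Type*} [Fintype A] [Nonempty A]
    (π₀ : A → ℝ) (hπpos : ∀ a, 0 < π₀ a) (hπsum : ∑ a, π₀ a = 1)
    (w : ℝ) (hw : 0 < w) (Q₁ Q₂ : A → ℝ) :
    |w * Real.log (∑ a, π₀ a * Real.exp (Q₁ a / w)) -
      w * Real.log (∑ a, π₀ a * Real.exp (Q₂ a / w))| ≤
    Finset.univ.sup' Finset.univ_nonempty (fun a => |Q₁ a - Q₂ a|) := by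
  set M := Finset.univ.sup' Finset.univ_nonempty (fun a => |Q₁ a - Q₂ a|)
  have h1 : ∀ a, Q₁ a - Q₂ a ≤ M := fun a =>
    le_trans (le_abs_self _) (Finset.le_sup' (fun a => |Q₁ a - Q₂ a|) (Finset.mem_univ a))
  have h2 : ∀ a, Q₂ a - Q₁ a ≤ M := fun a =>
    le_trans ((le_abs_self _).trans (abs_sub_comm _ _).le)
      (Finset.le_sup' (fun a => |Q₁ a - Q₂ a|) (Finset.mem_univ a))
  rw [abs_sub_le_iff]
  exact ⟨mellowmax_aux π₀ hπpos w hw Q₁ Q₂ M h1,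
         mellowmax_aux π₀ hπpos w hw Q₂ Q₁ M h2⟩
end

section
/- Let S and A be finite nonempty sets, let p : S × A × S → ℝ satisfy p(s'|s,a) ≥ 0 and ∑_{s'} p(s'|s,a) = 1 for all (s,a), let r : S × A → ℝ, let γ ∈ [0,1), let π₀ : S × A → ℝ satisfy π₀(a|s) > 0 and ∑_a π₀(a|s) = 1 for every s, and let w > 0. Then the soft Bellman operator B_w[Q](s,a) = r(s,a) + γ·∑_{s'} p(s'|s,a)·w·log(∑_{a'} π₀(a'|s')·exp(Q(s',a')/w)) has a unique fixed point: there exists exactly one function Q*_w : S × A → ℝ such that B_w[Q*_w] = Q*_w. -/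
lemma mm_diff_le_s2 {A : Type*} [Fintype A] [Nonempty A]
    (π : A → ℝ) (hπ : ∀ a, 0 < π a) (w : ℝ) (hw : 0 < w)
    (f g : A → ℝ) (D : ℝ) (hD : ∀ a, f a - g a ≤ D) :
    w * Real.log (∑ a, π a * Real.exp (f a / w)) -
      w * Real.log (∑ a, π a * Real.exp (g a / w)) ≤ D := by
  have hX : 0 < ∑ a, π a * Real.exp (f a / w) :=
    Finset.sum_pos (fun a _ => mul_pos (hπ a) (Real.exp_pos _)) Finset.univ_nonempty
  have hY : 0 < ∑ a, π a * Real.exp (g a / w) :=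
    Finset.sum_pos (fun a _ => mul_pos (hπ a) (Real.exp_pos _)) Finset.univ_nonempty
  have hXY : (∑ a, π a * Real.exp (f a / w)) ≤
      Real.exp (D / w) * ∑ a, π a * Real.exp (g a / w) := by
    rw [Finset.mul_sum]
    apply Finset.sum_le_sum
    intro a _
    rw [mul_comm (Real.exp (D / w)), mul_assoc, ← Real.exp_add]
    apply mul_le_mul_of_nonneg_left _ (hπ a).le
    apply Real.exp_le_exp.2
    rw [← add_div, div_le_div_iff_of_pos_right hw]
    linarith [hD a]
  have hlog : Real.log (∑ a, π a * Real.exp (f a / w)) ≤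
      D / w + Real.log (∑ a, π a * Real.exp (g a / w)) := by
    calc Real.log (∑ a, π a * Real.exp (f a / w))
        ≤ Real.log (Real.exp (D / w) * ∑ a, π a * Real.exp (g a / w)) :=
          Real.log_le_log hX hXY
      _ = D / w + Real.log (∑ a, π a * Real.exp (g a / w)) := by
          rw [Real.log_mul (Real.exp_pos _).ne' hY.ne', Real.log_exp]
  have := mul_le_mul_of_nonneg_left hlog hw.le
  rw [mul_add, mul_div_cancel₀ _ hw.ne'] at this
  linarith

lemma mm_abs_le {A : Type*} [Fintype A] [Nonempty A]
    (π : A → ℝ) (hπ : ∀ a, 0 < π a) (w : ℝ) (hw : 0 < w)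
    (f g : A → ℝ) (D : ℝ) (hD : ∀ a, |f a - g a| ≤ D) :
    |w * Real.log (∑ a, π a * Real.exp (f a / w)) -
      w * Real.log (∑ a, π a * Real.exp (g a / w))| ≤ D := by
  rw [abs_sub_le_iff]
  constructor
  · exact mm_diff_le_s2 π hπ w hw f g D (fun a => (abs_le.1 (hD a)).2)
  · exact mm_diff_le_s2 π hπ w hw g f D (fun a => by
      have := (abs_le.1 (hD a)).1; linarith)

/-- The soft Bellman operator has a unique fixed point. -/
theorem softBellman_fixedPoint_existsUnique
    {S A : Type*} [Fintype S] [Fintype A] [Nonempty S] [Nonempty A]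
    (p : S → A → S → ℝ) (hp_nonneg : ∀ s a s', 0 ≤ p s a s')
    (hp_sum : ∀ s a, ∑ s', p s a s' = 1)
    (r : S → A → ℝ) (γ : ℝ) (hγ0 : 0 ≤ γ) (hγ1 : γ < 1)
    (π₀ : S → A → ℝ) (hπpos : ∀ s a, 0 < π₀ s a) (hπsum : ∀ s, ∑ a, π₀ s a = 1)
    (w : ℝ) (hw : 0 < w) :
    ∃! Qstar : S → A → ℝ, softBellman p r γ π₀ w Qstar = Qstar := by
  set K : NNReal := ⟨γ, hγ0⟩ with hK
  have hlip : LipschitzWith K (softBellman p r γ π₀ w) := by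
    apply LipschitzWith.of_dist_le_mul
    intro Q Q'
    have hKγ : (K : ℝ) = γ := rfl
    rw [hKγ]
    have hd0 : 0 ≤ γ * dist Q Q' := mul_nonneg hγ0 dist_nonneg
    rw [dist_pi_le_iff hd0]
    intro s
    rw [dist_pi_le_iff hd0]
    intro a
    simp only [softBellman, Real.dist_eq]
    have key : ∀ s', |w * Real.log (∑ a', π₀ s' a' * Real.exp (Q s' a' / w)) -
        w * Real.log (∑ a', π₀ s' a' * Real.exp (Q' s' a' / w))| ≤ dist Q Q' := by
      intro s'
      apply mm_abs_le (π₀ s') (hπpos s') w hw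
      intro a'
      rw [← Real.dist_eq]
      exact (dist_le_pi_dist (Q s') (Q' s') a').trans (dist_le_pi_dist Q Q' s')
    calc |(r s a + γ * ∑ s', p s a s' * (w * Real.log (∑ a', π₀ s' a' * Real.exp (Q s' a' / w)))) -
          (r s a + γ * ∑ s', p s a s' * (w * Real.log (∑ a', π₀ s' a' * Real.exp (Q' s' a' / w))))|
        = |γ * ∑ s', p s a s' * ((w * Real.log (∑ a', π₀ s' a' * Real.exp (Q s' a' / w))) -
            (w * Real.log (∑ a', π₀ s' a' * Real.exp (Q' s' a' / w))))| := by
          congr 1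
          simp only [mul_sub, Finset.sum_sub_distrib]
          ring
      _ ≤ γ * ∑ s', p s a s' * dist Q Q' := by
          rw [abs_mul, abs_of_nonneg hγ0]
          apply mul_le_mul_of_nonneg_left _ hγ0
          calc |∑ s', p s a s' * (_ - _)| ≤ ∑ s', |p s a s' * (_ - _)| :=
                Finset.abs_sum_le_sum_abs _ _
            _ ≤ ∑ s', p s a s' * dist Q Q' := by
                apply Finset.sum_le_sum
                intro s' _
                rw [abs_mul, abs_of_nonneg (hp_nonneg s a s')]
                exact mul_le_mul_of_nonneg_left (key s') (hp_nonneg s a s')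
      _ = γ * dist Q Q' := by rw [← Finset.sum_mul, hp_sum, one_mul]
  have hcontr : ContractingWith K (softBellman p r γ π₀ w) := ⟨by exact_mod_cast hγ1, hlip⟩
  refine ⟨hcontr.fixedPoint, hcontr.fixedPoint_isFixedPt, fun Q hQ => ?_⟩
  exact hcontr.fixedPoint_unique hQ
end

section
/- Let A be a finite nonempty set and let π₀ : A → ℝ satisfy π₀(a) > 0 for all a ∈ A and ∑_{a∈A} π₀(a) = 1. Then for any Q : A → ℝ and any temperatures 0 < w' ≤ w, it holds that w·log(∑_{a∈A} π₀(a)·exp(Q(a)/w)) ≤ w'·log(∑_{a∈A} π₀(a)·exp(Q(a)/w')), i.e., the mellowmax value is monotone non-increasing as a function of the temperature w on (0,∞). -/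
/-- The mellowmax value is monotone non-increasing in the temperature. -/
theorem mellowmax_antitone_in_temperature
    {A : Type*} [Fintype A] [Nonempty A]
    (π₀ : A → ℝ) (hπpos : ∀ a, 0 < π₀ a) (hπsum : ∑ a, π₀ a = 1)
    (Q : A → ℝ) (w w' : ℝ) (hw' : 0 < w') (hww' : w' ≤ w) :
    w * Real.log (∑ a, π₀ a * Real.exp (Q a / w)) ≤
      w' * Real.log (∑ a, π₀ a * Real.exp (Q a / w')) := by
  have hw : 0 < w := lt_of_lt_of_le hw' hww'
  set t : ℝ := w' / w with ht
  have ht0 : 0 < t := div_pos hw' hw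
  have ht1 : t ≤ 1 := div_le_one_of_le₀ hww' hw.le
  set x : A → ℝ := fun a => Real.exp (Q a / w') with hx
  have hxpos : ∀ a, 0 < x a := fun a => Real.exp_pos _
  -- key: exp (Q a / w) = (x a) ^ t
  have hkey : ∀ a, Real.exp (Q a / w) = (x a) ^ t := by
    intro a
    show Real.exp (Q a / w) = Real.exp (Q a / w') ^ t
    rw [← Real.exp_mul]
    congr 1
    rw [ht]
    field_simp
  have hS' : 0 < ∑ a, π₀ a * x a :=
    Finset.sum_pos (fun a _ => mul_pos (hπpos a) (hxpos a)) Finset.univ_nonempty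
  -- Jensen: ∑ π (x a)^t ≤ (∑ π x a)^t
  have hjensen : (∑ a, π₀ a * (x a) ^ t) ≤ (∑ a, π₀ a * x a) ^ t := by
    have := (Real.concaveOn_rpow ht0.le ht1).le_map_sum
      (t := Finset.univ) (w := π₀) (p := x)
      (fun a _ => (hπpos a).le) hπsum (fun a _ => (hxpos a).le)
    simpa [smul_eq_mul] using this
  have hSpos : 0 < ∑ a, π₀ a * Real.exp (Q a / w) :=
    Finset.sum_pos (fun a _ => mul_pos (hπpos a) (Real.exp_pos _)) Finset.univ_nonempty
  have hlog : Real.log (∑ a, π₀ a * Real.exp (Q a / w)) ≤ t * Real.log (∑ a, π₀ a * x a) := by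
    rw [← Real.log_rpow hS']
    apply Real.log_le_log hSpos
    simpa only [hkey] using hjensen
  calc w * Real.log (∑ a, π₀ a * Real.exp (Q a / w))
      ≤ w * (t * Real.log (∑ a, π₀ a * x a)) := by
        exact mul_le_mul_of_nonneg_left hlog hw.le
    _ = w' * Real.log (∑ a, π₀ a * x a) := by
        rw [ht]; field_simp
end

section
/- Let A be a finite nonempty set, let π₀ : A → ℝ satisfy π₀(a) > 0 for all a ∈ A and ∑_{a∈A} π₀(a) = 1, and let Q : A → ℝ. For w > 0, define the annealed Gibbs distribution p_w(a) = π₀(a)·exp(Q(a)/w) / ∑_{b∈A} π₀(b)·exp(Q(b)/w). Then for every w > 0, the function w ↦ w·log(∑_{a∈A} π₀(a)·exp(Q(a)/w)) is differentiable at w with derivative equal to −∑_{a∈A} p_w(a)·log(p_w(a)/π₀(a)), i.e., minus the Kullback–Leibler divergence of p_w from π₀ (equivalently, the entropy of p_w plus the p_w-expectation of log π₀). -/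
/-- The derivative of the mellowmax value with respect to the temperature
equals minus the KL divergence of the annealed Gibbs distribution from the prior. -/
theorem mellowmax_hasDerivAt_neg_KL
    {A : Type*} [Fintype A] [Nonempty A]
    (π₀ : A → ℝ) (hπpos : ∀ a, 0 < π₀ a) (hπsum : ∑ a, π₀ a = 1)
    (Q : A → ℝ)
    (p : ℝ → A → ℝ)
    (hp : ∀ w a, p w a =
      π₀ a * Real.exp (Q a / w) / ∑ b, π₀ b * Real.exp (Q b / w))
    (w : ℝ) (hw : 0 < w) :
    HasDerivAt (fun v : ℝ => v * Real.log (∑ a, π₀ a * Real.exp (Q a / v)))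
      (-∑ a, p w a * Real.log (p w a / π₀ a)) w := by
  set S : ℝ := ∑ a, π₀ a * Real.exp (Q a / w) with hS
  have hSpos : 0 < S := Finset.sum_pos
    (fun a _ => mul_pos (hπpos a) (Real.exp_pos _)) Finset.univ_nonempty
  set T : ℝ := ∑ a, π₀ a * Real.exp (Q a / w) * Q a with hT
  -- derivative of the inner sum
  have hsum : HasDerivAt (fun v : ℝ => ∑ a, π₀ a * Real.exp (Q a / v))
      (∑ a, π₀ a * (Real.exp (Q a / w) * (-(Q a) / w ^ 2))) w := by
    apply HasDerivAt.fun_sum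
    intro a _
    have h1 : HasDerivAt (fun v : ℝ => Q a / v) ((0 * w - Q a * 1) / w ^ 2) w :=
      (hasDerivAt_const w (Q a)).div (hasDerivAt_id w) hw.ne'
    have h2 := (h1.exp).const_mul (π₀ a)
    convert h2 using 1
    rfl
    ring
  have hderiv : ∑ a, π₀ a * (Real.exp (Q a / w) * (-(Q a) / w ^ 2)) = -T / w ^ 2 := by
    have h : ∀ a : A, π₀ a * (Real.exp (Q a / w) * (-(Q a) / w ^ 2)) =
        -(π₀ a * Real.exp (Q a / w) * Q a / w ^ 2) := by intro a; ring
    simp only [h]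
    rw [Finset.sum_neg_distrib, ← Finset.sum_div, hT, neg_div]
  rw [hderiv] at hsum
  have hlog := hsum.log hSpos.ne'
  have hmul := (hasDerivAt_id w).mul hlog
  have key : HasDerivAt (fun v : ℝ => v * Real.log (∑ a, π₀ a * Real.exp (Q a / v)))
      (1 * Real.log S + w * (-T / w ^ 2 / S)) w := hmul
  -- now identify the derivative value
  have hpsum : ∑ a, p w a = 1 := by
    simp only [hp]
    rw [← Finset.sum_div, ← hS, div_self hSpos.ne']
  have hterm : ∀ a, p w a * Real.log (p w a / π₀ a) =
      p w a * (Q a / w) - p w a * Real.log S := by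
    intro a
    have hpa : p w a / π₀ a = Real.exp (Q a / w) / S := by
      rw [hp, mul_div_assoc, mul_div_cancel_left₀ _ (hπpos a).ne']
    rw [hpa, Real.log_div (Real.exp_pos _).ne' hSpos.ne', Real.log_exp]
    ring
  have hKL : ∑ a, p w a * Real.log (p w a / π₀ a) = T / (w * S) - Real.log S := by
    simp only [hterm]
    rw [Finset.sum_sub_distrib, ← Finset.sum_mul, hpsum, one_mul]
    congr 1
    have : ∀ a, p w a * (Q a / w) = π₀ a * Real.exp (Q a / w) * Q a / (w * S) := by
      intro a
      rw [hp, div_mul_div_comm, mul_comm S w]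
    simp only [this]
    rw [← Finset.sum_div, hT]
  rw [hKL]
  convert key using 1
  field_simp
  ring
end

section
/- Let I and A be finite nonempty sets, let μ : I → ℝ satisfy μ(i) > 0 for all i and ∑_{i∈I} μ(i) = 1, and let π₀ : A → ℝ satisfy π₀(a) > 0 for all a and ∑_{a∈A} π₀(a) = 1. Let Q : I × A → ℝ and let temperatures satisfy 0 < w' ≤ w. Then w·log(∑_{i∈I} μ(i)·exp( [w'·log(∑_{a∈A} π₀(a)·exp(Q(i,a)/w'))] / w )) ≥ w'·log(∑_{a∈A} π₀(a)·exp( [w·log(∑_{i∈I} μ(i)·exp(Q(i,a)/w))] / w' )), i.e., applying the higher-temperature mellowmax over the index set outside the lower-temperature mellowmax over actions dominates the commuted order; moreover equality holds when w = w'. -/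
open Finset

/-- Weight absorption: `c * x ^ p = (c ^ (1/p) * x) ^ p`. -/
lemma absorb_weight {c x p : ℝ} (hc : 0 ≤ c) (hx : 0 ≤ x) (hp : 0 < p) :
    c * x ^ p = (c ^ (1 / p) * x) ^ p := by
  rw [Real.mul_rpow (Real.rpow_nonneg hc _) hx, ← Real.rpow_mul hc,
    one_div, inv_mul_cancel₀ hp.ne', Real.rpow_one]

/-- Generalized weighted Minkowski inequality for finite sums. -/
lemma weighted_minkowski {ι A : Type*} [Fintype A] (s : Finset ι)
    (c : A → ℝ) (hc : ∀ a, 0 ≤ c a) (g : ι → A → ℝ) (hg : ∀ i a, 0 ≤ g i a)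
    {p : ℝ} (hp : 1 ≤ p) :
    (∑ a, c a * (∑ i ∈ s, g i a) ^ p) ^ (1 / p) ≤
      ∑ i ∈ s, (∑ a, c a * (g i a) ^ p) ^ (1 / p) := by
  have hp0 : 0 < p := lt_of_lt_of_le one_pos hp
  classical
  induction s using Finset.induction with
  | empty =>
      simp only [Finset.sum_empty, Real.zero_rpow hp0.ne', mul_zero, Finset.sum_const_zero]
      rw [Real.zero_rpow (by positivity : (1:ℝ)/p ≠ 0)]
  | @insert j s hj ih =>
      rw [Finset.sum_insert hj]
      refine le_trans ?_ (add_le_add_right ih _)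
      have key :
          (∑ a, (c a ^ (1/p) * g j a + c a ^ (1/p) * (∑ i ∈ s, g i a)) ^ p) ^ (1/p) ≤
            (∑ a, (c a ^ (1/p) * g j a) ^ p) ^ (1/p) +
              (∑ a, (c a ^ (1/p) * (∑ i ∈ s, g i a)) ^ p) ^ (1/p) :=
        Real.Lp_add_le_of_nonneg Finset.univ hp
          (fun a _ => mul_nonneg (Real.rpow_nonneg (hc a) _) (hg j a))
          (fun a _ => mul_nonneg (Real.rpow_nonneg (hc a) _)
            (Finset.sum_nonneg fun i _ => hg i a))
      calc (∑ a, c a * ((∑ i ∈ insert j s, g i a)) ^ p) ^ (1/p)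
          = (∑ a, (c a ^ (1/p) * g j a + c a ^ (1/p) * (∑ i ∈ s, g i a)) ^ p) ^ (1/p) := by
            congr 1
            refine Finset.sum_congr rfl fun a _ => ?_
            rw [Finset.sum_insert hj, ← mul_add,
              ← absorb_weight (hc a) (by
                exact add_nonneg (hg j a) (Finset.sum_nonneg fun i _ => hg i a)) hp0]
        _ ≤ (∑ a, (c a ^ (1/p) * g j a) ^ p) ^ (1/p) +
              (∑ a, (c a ^ (1/p) * (∑ i ∈ s, g i a)) ^ p) ^ (1/p) := key
        _ = (∑ a, c a * g j a ^ p) ^ (1/p) + (∑ a, c a * (∑ i ∈ s, g i a) ^ p) ^ (1/p) := by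
            congr 1 <;> congr 1 <;> refine Finset.sum_congr rfl fun a _ => ?_
            · rw [← absorb_weight (hc a) (hg j a) hp0]
            · rw [← absorb_weight (hc a)
                (Finset.sum_nonneg fun i _ => hg i a) hp0]

/-- Applying the higher-temperature mellowmax over the ensemble index set
outside the lower-temperature mellowmax over actions dominates the commuted order,
with equality when the two temperatures coincide. -/
theorem mellowmax_commutation_bound
    {I A : Type*} [Fintype I] [Nonempty I] [Fintype A] [Nonempty A]
    (μ : I → ℝ) (hμpos : ∀ i, 0 < μ i) (hμsum : ∑ i, μ i = 1)
    (π₀ : A → ℝ) (hπpos : ∀ a, 0 < π₀ a) (hπsum : ∑ a, π₀ a = 1)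
    (Q : I → A → ℝ) (w w' : ℝ) (hw' : 0 < w') (hww' : w' ≤ w) :
    w * Real.log (∑ i, μ i *
        Real.exp ((w' * Real.log (∑ a, π₀ a * Real.exp (Q i a / w'))) / w)) ≥
      w' * Real.log (∑ a, π₀ a *
        Real.exp ((w * Real.log (∑ i, μ i * Real.exp (Q i a / w))) / w')) ∧
    (w = w' →
      w * Real.log (∑ i, μ i *
          Real.exp ((w' * Real.log (∑ a, π₀ a * Real.exp (Q i a / w'))) / w)) =
        w' * Real.log (∑ a, π₀ a *
          Real.exp ((w * Real.log (∑ i, μ i * Real.exp (Q i a / w))) / w'))) := by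
  have hw : 0 < w := lt_of_lt_of_le hw' hww'
  constructor
  · -- inequality
    set p : ℝ := w / w' with hp_def
    have hp1 : 1 ≤ p := (one_le_div hw').2 hww'
    have hp0 : 0 < p := lt_of_lt_of_le one_pos hp1
    set f : I → A → ℝ := fun i a => Real.exp (Q i a / w) with hf_def
    have hfpos : ∀ i a, 0 < f i a := fun i a => Real.exp_pos _
    have hexp : ∀ i a, Real.exp (Q i a / w') = f i a ^ p := by
      intro i a
      show Real.exp (Q i a / w') = Real.exp (Q i a / w) ^ p
      rw [← Real.exp_mul]
      congr 1
      field_simp [hp_def]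
      rw [hp_def]; field_simp
    set P : I → ℝ := fun i => ∑ a, π₀ a * f i a ^ p with hP_def
    have hPpos : ∀ i, 0 < P i := fun i =>
      Finset.sum_pos (fun a _ => mul_pos (hπpos a)
        (Real.rpow_pos_of_pos (hfpos i a) _)) Finset.univ_nonempty
    set S : A → ℝ := fun a => ∑ i, μ i * f i a with hS_def
    have hSpos : ∀ a, 0 < S a := fun a =>
      Finset.sum_pos (fun i _ => mul_pos (hμpos i) (hfpos i a)) Finset.univ_nonempty
    have hL : ∀ i, Real.exp ((w' * Real.log (∑ a, π₀ a * Real.exp (Q i a / w'))) / w)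
        = P i ^ (1 / p) := by
      intro i
      have h : (∑ a, π₀ a * Real.exp (Q i a / w')) = P i :=
        Finset.sum_congr rfl fun a _ => by rw [hexp]
      rw [h, Real.rpow_def_of_pos (hPpos i)]
      congr 1
      field_simp [hp_def]
      rw [hp_def]; field_simp
    have hR : ∀ a, Real.exp ((w * Real.log (∑ i, μ i * Real.exp (Q i a / w))) / w')
        = S a ^ p := by
      intro a
      have h : (∑ i, μ i * Real.exp (Q i a / w)) = S a := rfl
      rw [h, Real.rpow_def_of_pos (hSpos a), hp_def]
      congr 1
      field_simp
    have hLHS : (∑ i, μ i * Real.exp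
        ((w' * Real.log (∑ a, π₀ a * Real.exp (Q i a / w'))) / w))
        = ∑ i, μ i * P i ^ (1 / p) :=
      Finset.sum_congr rfl fun i _ => by rw [hL i]
    have hRHS : (∑ a, π₀ a * Real.exp
        ((w * Real.log (∑ i, μ i * Real.exp (Q i a / w))) / w'))
        = ∑ a, π₀ a * S a ^ p :=
      Finset.sum_congr rfl fun a _ => by rw [hR a]
    have hmink : (∑ a, π₀ a * S a ^ p) ^ (1 / p) ≤ ∑ i, μ i * P i ^ (1 / p) := by
      have hmk := weighted_minkowski (Finset.univ : Finset I) π₀ (fun a => (hπpos a).le)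
        (fun i a => μ i * f i a) (fun i a => (mul_pos (hμpos i) (hfpos i a)).le) hp1
      refine le_trans (le_of_eq rfl) (le_trans hmk (le_of_eq ?_))
      refine Finset.sum_congr rfl fun i _ => ?_
      have h : (∑ a, π₀ a * (μ i * f i a) ^ p) = μ i ^ p * P i := by
        rw [hP_def, Finset.mul_sum]
        refine Finset.sum_congr rfl fun a _ => ?_
        rw [Real.mul_rpow (hμpos i).le (hfpos i a).le]
        ring
      rw [h, Real.mul_rpow (Real.rpow_nonneg (hμpos i).le _) (hPpos i).le,
        ← Real.rpow_mul (hμpos i).le, mul_one_div, div_self hp0.ne', Real.rpow_one]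
    rw [hLHS, hRHS]
    have hT : 0 < (∑ a, π₀ a * S a ^ p) :=
      Finset.sum_pos (fun a _ => mul_pos (hπpos a)
        (Real.rpow_pos_of_pos (hSpos a) _)) Finset.univ_nonempty
    have hlog : Real.log ((∑ a, π₀ a * S a ^ p) ^ (1 / p)) ≤
        Real.log (∑ i, μ i * P i ^ (1 / p)) :=
      Real.log_le_log (Real.rpow_pos_of_pos hT _) hmink
    rw [Real.log_rpow hT] at hlog
    have hmul := mul_le_mul_of_nonneg_left hlog hw.le
    calc w' * Real.log (∑ a, π₀ a * S a ^ p)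
        = w * (1 / p * Real.log (∑ a, π₀ a * S a ^ p)) := by
          rw [hp_def]; field_simp
      _ ≤ w * Real.log (∑ i, μ i * P i ^ (1 / p)) := hmul
  · -- equality when w = w'
    intro hweq
    subst hweq
    have h1 : ∀ i, Real.exp ((w * Real.log (∑ a, π₀ a * Real.exp (Q i a / w))) / w)
        = ∑ a, π₀ a * Real.exp (Q i a / w) := by
      intro i
      rw [mul_div_cancel_left₀ _ hw.ne', Real.exp_log]
      exact Finset.sum_pos (fun a _ => mul_pos (hπpos a) (Real.exp_pos _))
        Finset.univ_nonempty
    have h2 : ∀ a, Real.exp ((w * Real.log (∑ i, μ i * Real.exp (Q i a / w))) / w)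
        = ∑ i, μ i * Real.exp (Q i a / w) := by
      intro a
      rw [mul_div_cancel_left₀ _ hw.ne', Real.exp_log]
      exact Finset.sum_pos (fun i _ => mul_pos (hμpos i) (Real.exp_pos _))
        Finset.univ_nonempty
    simp only [h1, h2]
    congr 1
    have hcomm := Finset.sum_comm (s := (Finset.univ : Finset I))
      (t := (Finset.univ : Finset A))
      (f := fun i a => μ i * (π₀ a * Real.exp (Q i a / w)))
    simp only [Finset.mul_sum]
    rw [hcomm]
    exact congrArg Real.log
      (Finset.sum_congr rfl fun a _ => Finset.sum_congr rfl fun i _ => by ring)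
end

section
/- Let A be a finite nonempty set, let π₀ : A → ℝ satisfy π₀(a) > 0 for all a ∈ A and ∑_{a∈A} π₀(a) = 1, let n ≥ 1, and let Q^(1), …, Q^(n) : A → ℝ. Suppose that (1/n)·∑_{i} max_{a∈A} Q^(i)(a) > max_{a∈A} (1/n)·∑_{i} Q^(i)(a) and that max_{a∈A} (1/n)·∑_{i} Q^(i)(a) > ∑_{a∈A} π₀(a)·(1/n)·∑_{i} Q^(i)(a). Then there exists a temperature w ∈ (0, ∞) such that (1/n)·∑_{i=1}^{n} w·log(∑_{a∈A} π₀(a)·exp(Q^(i)(a)/w)) = max_{a∈A} (1/n)·∑_{i=1}^{n} Q^(i)(a), i.e., an unbiased temperature exists at which the ensemble average of mellowmax values matches the maximum of the ensemble-averaged values. -/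
set_option maxHeartbeats 1000000

/-- Existence of an unbiased temperature, at which the ensemble average
of mellowmax values matches the maximum of the ensemble-averaged values. -/
theorem exists_unbiased_temperature
    {A : Type*} [Fintype A] [Nonempty A]
    (π₀ : A → ℝ) (hπpos : ∀ a, 0 < π₀ a) (hπsum : ∑ a, π₀ a = 1)
    (n : ℕ) (hn : 1 ≤ n) (Q : Fin n → A → ℝ)
    (hgap : Finset.univ.sup' Finset.univ_nonempty
        (fun a => (1 / (n : ℝ)) * ∑ i, Q i a) <
      (1 / (n : ℝ)) * ∑ i, Finset.univ.sup' Finset.univ_nonempty (Q i))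
    (hmean : ∑ a, π₀ a * ((1 / (n : ℝ)) * ∑ i, Q i a) <
      Finset.univ.sup' Finset.univ_nonempty
        (fun a => (1 / (n : ℝ)) * ∑ i, Q i a)) :
    ∃ w : ℝ, 0 < w ∧
      (1 / (n : ℝ)) * ∑ i, w * Real.log (∑ a, π₀ a * Real.exp (Q i a / w)) =
        Finset.univ.sup' Finset.univ_nonempty
          (fun a => (1 / (n : ℝ)) * ∑ i, Q i a) := by
  haveI : Nonempty (Fin n) := ⟨⟨0, hn⟩⟩
  have hnpos : (0 : ℝ) < n := by positivity
  set M : ℝ := Finset.univ.sup' Finset.univ_nonempty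
      (fun a => (1 / (n : ℝ)) * ∑ i, Q i a) with hM
  set Mstar : ℝ := (1 / (n : ℝ)) * ∑ i, Finset.univ.sup' Finset.univ_nonempty (Q i) with hMstar
  set μ : ℝ := ∑ a, π₀ a * ((1 / (n : ℝ)) * ∑ i, Q i a) with hμ
  set F : ℝ → ℝ := fun w => (1 / (n : ℝ)) * ∑ i, w * Real.log (∑ a, π₀ a * Real.exp (Q i a / w)) with hF
  -- basic facts about π₀
  have hπle1 : ∀ a, π₀ a ≤ 1 := by
    intro a
    rw [← hπsum]
    exact Finset.single_le_sum (fun b _ => (hπpos b).le) (Finset.mem_univ a)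
  set L : ℝ := Finset.univ.inf' Finset.univ_nonempty (fun a => Real.log (π₀ a)) with hL
  have hLle0 : L ≤ 0 := by
    obtain ⟨a⟩ := (inferInstance : Nonempty A)
    exact le_trans (Finset.inf'_le _ (Finset.mem_univ a))
      (Real.log_nonpos (hπpos a).le (hπle1 a))
  set K : ℝ := (1 / (n : ℝ)) * ∑ i, ∑ a, π₀ a * (Q i a)^2 with hK
  have hKnonneg : 0 ≤ K := by
    apply mul_nonneg (by positivity)
    apply Finset.sum_nonneg; intro i _
    apply Finset.sum_nonneg; intro a _
    exact mul_nonneg (hπpos a).le (sq_nonneg _)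
  set C : ℝ := Finset.univ.sup' Finset.univ_nonempty (fun p : Fin n × A => |Q p.1 p.2|) with hC
  have hCle : ∀ i a, |Q i a| ≤ C := fun i a =>
    Finset.le_sup' (f := fun p : Fin n × A => |Q p.1 p.2|) (Finset.mem_univ (i, a))
  -- the two endpoints
  set w₁ : ℝ := (Mstar - M) / (2 * (1 - L)) with hw₁
  have h1L : (0:ℝ) < 1 - L := by linarith
  have hw₁pos : 0 < w₁ := by
    apply div_pos (by linarith [hgap]) (by linarith)
  set w₂ : ℝ := max w₁ (max C 1) + (K + 1) / (M - μ) with hw₂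
  have hMμ : 0 < M - μ := by linarith [hmean]
  have hfrac : 0 < (K + 1) / (M - μ) := by positivity
  have hmaxle : max w₁ (max C 1) ≤ w₂ := by rw [hw₂]; linarith
  have hw₁₂ : w₁ ≤ w₂ := le_trans (le_max_left _ _) hmaxle
  have hw₂pos : 0 < w₂ := lt_of_lt_of_le hw₁pos hw₁₂
  have hw₂C : C ≤ w₂ := le_trans (le_trans (le_max_left _ _) (le_max_right w₁ _)) hmaxle
  have hw₂1 : (1:ℝ) ≤ w₂ := le_trans (le_trans (le_max_right _ _) (le_max_right w₁ _)) hmaxle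
  have hw₂K : (K + 1) / (M - μ) ≤ w₂ := by
    have : (0:ℝ) ≤ max w₁ (max C 1) := le_trans (le_trans zero_le_one (le_max_right C 1)) (le_max_right w₁ _)
    linarith
  -- positivity of inner sums
  have hSpos : ∀ (w : ℝ) (i : Fin n), 0 < ∑ a, π₀ a * Real.exp (Q i a / w) := by
    intro w i
    exact Finset.sum_pos (fun a _ => mul_pos (hπpos a) (Real.exp_pos _)) Finset.univ_nonempty
  -- lower bound: M ≤ F w₁
  have hlow : M ≤ F w₁ := by
    have hterm : ∀ i : Fin n,
        Finset.univ.sup' Finset.univ_nonempty (Q i) + w₁ * L ≤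
          w₁ * Real.log (∑ a, π₀ a * Real.exp (Q i a / w₁)) := by
      intro i
      obtain ⟨a, -, ha⟩ := Finset.exists_mem_eq_sup' (Finset.univ_nonempty (α := A)) (Q i)
      have h1 : π₀ a * Real.exp (Q i a / w₁) ≤ ∑ b, π₀ b * Real.exp (Q i b / w₁) :=
        Finset.single_le_sum (f := fun b => π₀ b * Real.exp (Q i b / w₁))
          (fun b _ => (mul_pos (hπpos b) (Real.exp_pos _)).le) (Finset.mem_univ a)
      have h2 : Real.log (π₀ a) + Q i a / w₁ ≤ Real.log (∑ b, π₀ b * Real.exp (Q i b / w₁)) := by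
        calc Real.log (π₀ a) + Q i a / w₁
            = Real.log (π₀ a * Real.exp (Q i a / w₁)) := by
              rw [Real.log_mul (ne_of_gt (hπpos a)) (ne_of_gt (Real.exp_pos _)), Real.log_exp]
          _ ≤ _ := Real.log_le_log (mul_pos (hπpos a) (Real.exp_pos _)) h1
      have h3 : L ≤ Real.log (π₀ a) := Finset.inf'_le _ (Finset.mem_univ a)
      have := mul_le_mul_of_nonneg_left h2 hw₁pos.le
      have hfield : w₁ * (Q i a / w₁) = Q i a := by
        rw [mul_comm, div_mul_cancel₀ _ (ne_of_gt hw₁pos)]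
      nlinarith [mul_le_mul_of_nonneg_left h3 hw₁pos.le]
    calc M ≤ (Mstar + M) / 2 := by linarith [hgap]
      _ ≤ Mstar + w₁ * L := by
          have : w₁ * (-L) ≤ (Mstar - M) / 2 := by
            rw [hw₁]
            rw [div_mul_eq_mul_div, div_le_div_iff₀ (by linarith) (by norm_num)]
            nlinarith [hgap]
          linarith
      _ = (1 / (n : ℝ)) * ∑ i, (Finset.univ.sup' Finset.univ_nonempty (Q i) + w₁ * L) := by
          rw [Finset.sum_add_distrib, Finset.sum_const, Finset.card_univ, Fintype.card_fin]
          rw [hMstar]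
          field_simp
          ring
      _ ≤ F w₁ := by
          apply mul_le_mul_of_nonneg_left _ (by positivity)
          exact Finset.sum_le_sum (fun i _ => hterm i)
  -- upper bound: F w₂ ≤ M
  have hhigh : F w₂ ≤ M := by
    have hterm : ∀ i : Fin n,
        w₂ * Real.log (∑ a, π₀ a * Real.exp (Q i a / w₂)) ≤
          (∑ a, π₀ a * Q i a) + (∑ a, π₀ a * (Q i a)^2) / w₂ := by
      intro i
      have hS := hSpos w₂ i
      have hexp : ∀ a : A, Real.exp (Q i a / w₂) ≤ 1 + Q i a / w₂ + (Q i a / w₂)^2 := by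
        intro a
        have habs : |Q i a / w₂| ≤ 1 := by
          rw [abs_div, abs_of_pos hw₂pos, div_le_one hw₂pos]
          exact le_trans (hCle i a) hw₂C
        have := Real.abs_exp_sub_one_sub_id_le habs
        have := abs_le.mp this
        linarith [this.2]
      have hSle : (∑ a, π₀ a * Real.exp (Q i a / w₂)) ≤
          1 + (∑ a, π₀ a * Q i a) / w₂ + (∑ a, π₀ a * (Q i a)^2) / w₂^2 := by
        calc (∑ a, π₀ a * Real.exp (Q i a / w₂))
            ≤ ∑ a, π₀ a * (1 + Q i a / w₂ + (Q i a / w₂)^2) :=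
              Finset.sum_le_sum (fun a _ => mul_le_mul_of_nonneg_left (hexp a) (hπpos a).le)
          _ = 1 + (∑ a, π₀ a * Q i a) / w₂ + (∑ a, π₀ a * (Q i a)^2) / w₂^2 := by
              have e1 : ∑ x : A, π₀ x * (1:ℝ) = 1 := by simpa using hπsum
              have e2 : ∑ x : A, π₀ x * (Q i x / w₂) = (∑ a, π₀ a * Q i a) / w₂ := by
                rw [Finset.sum_div]
                exact Finset.sum_congr rfl (fun a _ => by ring)
              have e3 : ∑ x : A, π₀ x * (Q i x / w₂)^2 = (∑ a, π₀ a * (Q i a)^2) / w₂^2 := by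
                rw [Finset.sum_div]
                exact Finset.sum_congr rfl (fun a _ => by rw [div_pow]; ring)
              simp only [mul_add]
              rw [Finset.sum_add_distrib, Finset.sum_add_distrib, e1, e2, e3]
      have hlog : Real.log (∑ a, π₀ a * Real.exp (Q i a / w₂)) ≤
          (∑ a, π₀ a * Q i a) / w₂ + (∑ a, π₀ a * (Q i a)^2) / w₂^2 := by
        have := Real.log_le_sub_one_of_pos hS
        linarith
      have := mul_le_mul_of_nonneg_left hlog hw₂pos.le
      have hne : w₂ ≠ 0 := ne_of_gt hw₂pos
      calc w₂ * Real.log (∑ a, π₀ a * Real.exp (Q i a / w₂))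
          ≤ w₂ * ((∑ a, π₀ a * Q i a) / w₂ + (∑ a, π₀ a * (Q i a)^2) / w₂^2) := this
        _ = (∑ a, π₀ a * Q i a) + (∑ a, π₀ a * (Q i a)^2) / w₂ := by
            field_simp
    have hsum : F w₂ ≤ μ + K / w₂ := by
      rw [hF]
      calc (1 / (n : ℝ)) * ∑ i, w₂ * Real.log (∑ a, π₀ a * Real.exp (Q i a / w₂))
          ≤ (1 / (n : ℝ)) * ∑ i, ((∑ a, π₀ a * Q i a) + (∑ a, π₀ a * (Q i a)^2) / w₂) := by
            apply mul_le_mul_of_nonneg_left _ (by positivity)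
            exact Finset.sum_le_sum (fun i _ => hterm i)
        _ = μ + K / w₂ := by
            rw [Finset.sum_add_distrib, mul_add, hμ, hK]
            congr 1
            · simp_rw [Finset.mul_sum]
              rw [Finset.sum_comm]
              exact Finset.sum_congr rfl fun a _ => Finset.sum_congr rfl fun i _ => by ring
            · rw [← Finset.sum_div, mul_div_assoc]
    have h1 : K + 1 ≤ w₂ * (M - μ) := by
      have h := hw₂K
      rw [div_le_iff₀ hMμ] at h
      linarith
    have h2 : K / w₂ < M - μ := by
      rw [div_lt_iff₀ hw₂pos, mul_comm]
      linarith
    linarith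
  -- continuity and IVT
  have hFcont : ContinuousOn F (Set.Icc w₁ w₂) := by
    apply ContinuousOn.mul continuousOn_const
    apply continuousOn_finset_sum
    intro i _
    apply ContinuousOn.mul continuousOn_id
    apply ContinuousOn.log
    · apply continuousOn_finset_sum
      intro a _
      apply ContinuousOn.mul continuousOn_const
      apply Real.continuous_exp.comp_continuousOn
      exact ContinuousOn.div continuousOn_const continuousOn_id
        (fun w hw => ne_of_gt (lt_of_lt_of_le hw₁pos hw.1))
    · intro w hw
      exact ne_of_gt (hSpos w i)
  have hmem : M ∈ Set.Icc (F w₂) (F w₁) := ⟨hhigh, hlow⟩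
  obtain ⟨w, hwmem, hFw⟩ := intermediate_value_Icc' hw₁₂ hFcont hmem
  exact ⟨w, lt_of_lt_of_le hw₁pos hwmem.1, hFw⟩
end

section
/- Let A be a finite nonempty set, let π₀ : A → ℝ satisfy π₀(a) > 0 for all a ∈ A and ∑_{a∈A} π₀(a) = 1, and let Q : A → ℝ be non-constant (i.e., there exist a, b ∈ A with Q(a) ≠ Q(b)). Then the function w ↦ w·log(∑_{a∈A} π₀(a)·exp(Q(a)/w)) is strictly decreasing on (0, ∞). -/
/-- For a non-constant Q, the mellowmax value is strictly decreasing
in the temperature on (0, ∞). -/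
theorem mellowmax_strictAntiOn
    {A : Type*} [Fintype A] [Nonempty A]
    (π₀ : A → ℝ) (hπpos : ∀ a, 0 < π₀ a) (hπsum : ∑ a, π₀ a = 1)
    (Q : A → ℝ) (hQ : ∃ a b : A, Q a ≠ Q b) :
    StrictAntiOn (fun w : ℝ => w * Real.log (∑ a, π₀ a * Real.exp (Q a / w)))
      (Set.Ioi (0 : ℝ)) := by
  intro w₁ hw₁ w₂ hw₂ hlt
  simp only [Set.mem_Ioi] at hw₁ hw₂
  set p : ℝ := w₂ / w₁ with hp
  have hp1 : 1 < p := (one_lt_div hw₁).2 hlt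
  have hS2pos : 0 < ∑ a, π₀ a * Real.exp (Q a / w₂) :=
    Finset.sum_pos (fun a _ => mul_pos (hπpos a) (Real.exp_pos _)) Finset.univ_nonempty
  -- exp(Q a / w₁) = (exp (Q a / w₂)) ^ p
  have hkey : ∀ a : A, Real.exp (Q a / w₁) = Real.exp (Q a / w₂) ^ p := by
    intro a
    rw [← Real.exp_mul]
    congr 1
    field_simp
    rw [hp]; field_simp
  -- strict Jensen for x ↦ x ^ p
  obtain ⟨a₀, b₀, hab⟩ := hQ
  have hne : Real.exp (Q a₀ / w₂) ≠ Real.exp (Q b₀ / w₂) := by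
    intro h
    apply hab
    have := Real.exp_injective h
    field_simp at this
    exact this
  have hjensen :
      (∑ a, π₀ a • Real.exp (Q a / w₂)) ^ p
        < ∑ a, π₀ a • (Real.exp (Q a / w₂) ^ p) := by
    exact (strictConvexOn_rpow hp1).map_sum_lt (fun i _ => hπpos i) hπsum
      (fun i _ => le_of_lt (Real.exp_pos _))
      ⟨a₀, Finset.mem_univ _, b₀, Finset.mem_univ _, hne⟩
  simp only [smul_eq_mul] at hjensen
  have hj' : (∑ a, π₀ a * Real.exp (Q a / w₂)) ^ p < ∑ a, π₀ a * Real.exp (Q a / w₁) := by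
    simpa only [hkey] using hjensen
  have hlog : p * Real.log (∑ a, π₀ a * Real.exp (Q a / w₂))
      < Real.log (∑ a, π₀ a * Real.exp (Q a / w₁)) := by
    have := Real.log_lt_log (Real.rpow_pos_of_pos hS2pos p) hj'
    rwa [Real.log_rpow hS2pos] at this
  have : w₁ * (p * Real.log (∑ a, π₀ a * Real.exp (Q a / w₂)))
      < w₁ * Real.log (∑ a, π₀ a * Real.exp (Q a / w₁)) :=
    (mul_lt_mul_iff_right₀ hw₁).2 hlog
  have hw : w₁ * (p * Real.log (∑ a, π₀ a * Real.exp (Q a / w₂)))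
      = w₂ * Real.log (∑ a, π₀ a * Real.exp (Q a / w₂)) := by
    rw [← mul_assoc, hp, mul_div_cancel₀ _ (ne_of_gt hw₁)]
  simpa [hw] using this
end

section
/- Let A be a finite nonempty set, let π₀ : A → ℝ satisfy π₀(a) > 0 for all a ∈ A and ∑_{a∈A} π₀(a) = 1, let n ≥ 1, and let Q^(1), …, Q^(n) : A → ℝ be such that at least one Q^(i) is non-constant. Then there is at most one w ∈ (0, ∞) satisfying the matching equation (1/n)·∑_{i=1}^{n} w·log(∑_{a∈A} π₀(a)·exp(Q^(i)(a)/w)) = max_{a∈A} (1/n)·∑_{i=1}^{n} Q^(i)(a), i.e., the unbiased temperature, if it exists, is unique. -/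
open Real Finset

lemma mm_key {A : Type*} [Fintype A] [Nonempty A]
    (π₀ : A → ℝ) (hπpos : ∀ a, 0 < π₀ a) (hπsum : ∑ a, π₀ a = 1)
    (q : A → ℝ) {v w : ℝ} (hv : 0 < v) (hvw : v < w) :
    w * Real.log (∑ a, π₀ a * Real.exp (q a / w)) ≤
      v * Real.log (∑ a, π₀ a * Real.exp (q a / v)) := by
  have hw : 0 < w := hv.trans hvw
  set p : ℝ := w / v with hp
  have hp1 : 1 < p := (one_lt_div hv).2 hvw
  have hZpos : 0 < ∑ a, π₀ a * Real.exp (q a / w) :=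
    Finset.sum_pos (fun a _ => mul_pos (hπpos a) (Real.exp_pos _)) Finset.univ_nonempty
  have hrpow : ∀ a : A, Real.exp (q a / w) ^ p = Real.exp (q a / v) := by
    intro a
    rw [Real.rpow_def_of_pos (Real.exp_pos _), Real.log_exp]
    congr 1
    field_simp [hp]
    rw [hp, mul_assoc, div_mul_cancel₀ _ hv.ne']
  have hJ : (∑ a, π₀ a * Real.exp (q a / w)) ^ p ≤ ∑ a, π₀ a * Real.exp (q a / v) := by
    have := (convexOn_rpow hp1.le).map_sum_le (t := Finset.univ)
      (w := π₀) (p := fun a => Real.exp (q a / w))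
      (fun a _ => (hπpos a).le) hπsum (fun a _ => (Real.exp_pos _).le)
    simp only [smul_eq_mul] at this
    calc (∑ a, π₀ a * Real.exp (q a / w)) ^ p ≤ ∑ a, π₀ a * Real.exp (q a / w) ^ p := this
      _ = _ := by simp [hrpow]
  have hlog : p * Real.log (∑ a, π₀ a * Real.exp (q a / w)) ≤
      Real.log (∑ a, π₀ a * Real.exp (q a / v)) := by
    rw [← Real.log_rpow hZpos]
    exact Real.log_le_log (Real.rpow_pos_of_pos hZpos _) hJ
  have := mul_le_mul_of_nonneg_left hlog hv.le
  calc w * Real.log (∑ a, π₀ a * Real.exp (q a / w))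
      = v * (p * Real.log (∑ a, π₀ a * Real.exp (q a / w))) := by
        rw [hp]; field_simp
    _ ≤ _ := this

lemma mm_key_strict {A : Type*} [Fintype A] [Nonempty A]
    (π₀ : A → ℝ) (hπpos : ∀ a, 0 < π₀ a) (hπsum : ∑ a, π₀ a = 1)
    (q : A → ℝ) {v w : ℝ} (hv : 0 < v) (hvw : v < w)
    (hq : ∃ a b : A, q a ≠ q b) :
    w * Real.log (∑ a, π₀ a * Real.exp (q a / w)) <
      v * Real.log (∑ a, π₀ a * Real.exp (q a / v)) := by
  have hw : 0 < w := hv.trans hvw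
  set p : ℝ := w / v with hp
  have hp1 : 1 < p := (one_lt_div hv).2 hvw
  have hZpos : 0 < ∑ a, π₀ a * Real.exp (q a / w) :=
    Finset.sum_pos (fun a _ => mul_pos (hπpos a) (Real.exp_pos _)) Finset.univ_nonempty
  have hrpow : ∀ a : A, Real.exp (q a / w) ^ p = Real.exp (q a / v) := by
    intro a
    rw [Real.rpow_def_of_pos (Real.exp_pos _), Real.log_exp]
    congr 1
    field_simp [hp]
    rw [hp, mul_assoc, div_mul_cancel₀ _ hv.ne']
  have hJ : (∑ a, π₀ a * Real.exp (q a / w)) ^ p < ∑ a, π₀ a * Real.exp (q a / v) := by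
    obtain ⟨a, b, hab⟩ := hq
    have hne : Real.exp (q a / w) ≠ Real.exp (q b / w) := by
      intro h
      apply hab
      have h' := Real.exp_injective h
      rw [div_eq_div_iff hw.ne' hw.ne'] at h'
      exact mul_right_cancel₀ hw.ne' h'
    have := (strictConvexOn_rpow hp1).map_sum_lt (t := Finset.univ)
      (w := π₀) (p := fun a => Real.exp (q a / w))
      (fun a _ => hπpos a) hπsum (fun a _ => (Real.exp_pos _).le)
      ⟨a, Finset.mem_univ a, b, Finset.mem_univ b, hne⟩
    simp only [smul_eq_mul] at this
    calc (∑ a, π₀ a * Real.exp (q a / w)) ^ p < ∑ a, π₀ a * Real.exp (q a / w) ^ p := this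
      _ = _ := by simp [hrpow]
  have hlog : p * Real.log (∑ a, π₀ a * Real.exp (q a / w)) <
      Real.log (∑ a, π₀ a * Real.exp (q a / v)) := by
    rw [← Real.log_rpow hZpos]
    exact Real.log_lt_log (Real.rpow_pos_of_pos hZpos _) hJ
  have := mul_lt_mul_of_pos_left hlog hv
  calc w * Real.log (∑ a, π₀ a * Real.exp (q a / w))
      = v * (p * Real.log (∑ a, π₀ a * Real.exp (q a / w))) := by
        rw [hp]; field_simp
    _ < _ := this

/-- If at least one ensemble member is non-constant, the unbiased
(matching) temperature is unique if it exists. -/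
theorem unbiased_temperature_unique
    {A : Type*} [Fintype A] [Nonempty A]
    (π₀ : A → ℝ) (hπpos : ∀ a, 0 < π₀ a) (hπsum : ∑ a, π₀ a = 1)
    (n : ℕ) (hn : 1 ≤ n) (Q : Fin n → A → ℝ)
    (hQ : ∃ i : Fin n, ∃ a b : A, Q i a ≠ Q i b)
    (w₁ w₂ : ℝ) (hw₁ : 0 < w₁) (hw₂ : 0 < w₂)
    (h₁ : (1 / (n : ℝ)) * ∑ i, w₁ * Real.log (∑ a, π₀ a * Real.exp (Q i a / w₁)) =
      Finset.univ.sup' Finset.univ_nonempty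
        (fun a => (1 / (n : ℝ)) * ∑ i, Q i a))
    (h₂ : (1 / (n : ℝ)) * ∑ i, w₂ * Real.log (∑ a, π₀ a * Real.exp (Q i a / w₂)) =
      Finset.univ.sup' Finset.univ_nonempty
        (fun a => (1 / (n : ℝ)) * ∑ i, Q i a)) :
    w₁ = w₂ := by
  have hnpos : (0 : ℝ) < 1 / (n : ℝ) := by
    have : (0 : ℝ) < (n : ℝ) := by exact_mod_cast hn
    positivity
  have key : ∀ v w : ℝ, 0 < v → v < w →
      (1 / (n : ℝ)) * ∑ i, w * Real.log (∑ a, π₀ a * Real.exp (Q i a / w)) <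
      (1 / (n : ℝ)) * ∑ i, v * Real.log (∑ a, π₀ a * Real.exp (Q i a / v)) := by
    intro v w hv hvw
    apply mul_lt_mul_of_pos_left _ hnpos
    obtain ⟨i₀, hq₀⟩ := hQ
    exact Finset.sum_lt_sum
      (fun i _ => mm_key π₀ hπpos hπsum (Q i) hv hvw)
      ⟨i₀, Finset.mem_univ i₀, mm_key_strict π₀ hπpos hπsum (Q i₀) hv hvw hq₀⟩
  rcases lt_trichotomy w₁ w₂ with h | h | h
  · exact absurd (h₁.trans h₂.symm) (key w₁ w₂ hw₁ h).ne'
  · exact h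
  · exact absurd (h₂.trans h₁.symm) (key w₂ w₁ hw₂ h).ne'
end

section
/- Let A be a finite nonempty set, let π₀ : A → ℝ satisfy π₀(a) > 0 for all a ∈ A and ∑_{a∈A} π₀(a) = 1, and let Q : A → ℝ. Let M = max_{a∈A} Q(a) and let S = {a ∈ A : Q(a) = M} be the set of maximizing actions. Then the limit as w → 0⁺ of (w·log(∑_{a∈A} π₀(a)·exp(Q(a)/w)) − M)/w exists and equals log(∑_{a∈S} π₀(a)); in particular, the one-sided derivative of the mellowmax value at temperature 0 equals the logarithm of the prior probability of the maximizing set. -/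
open Filter Topology

/-- The one-sided derivative of the mellowmax value at temperature 0
equals the logarithm of the prior probability of the set of maximizing actions. -/
theorem mellowmax_deriv_at_zero
    {A : Type*} [Fintype A] [Nonempty A] [DecidableEq A]
    (π₀ : A → ℝ) (hπpos : ∀ a, 0 < π₀ a) (hπsum : ∑ a, π₀ a = 1)
    (Q : A → ℝ)
    (M : ℝ) (hM : M = Finset.univ.sup' Finset.univ_nonempty Q) :
    Tendsto
      (fun w : ℝ => (w * Real.log (∑ a, π₀ a * Real.exp (Q a / w)) - M) / w)
      (𝓝[>] 0)
      (𝓝 (Real.log (∑ a ∈ Finset.univ.filter (fun a => Q a = M), π₀ a))) := by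
  have hS : (0:ℝ) < ∑ a ∈ Finset.univ.filter (fun a => Q a = M), π₀ a := by
    obtain ⟨a, ha, hQa⟩ := Finset.exists_mem_eq_sup' Finset.univ_nonempty Q
    refine Finset.sum_pos' (fun b _ => (hπpos b).le) ⟨a, Finset.mem_filter.mpr ⟨ha, ?_⟩, hπpos a⟩
    rw [hM, ← hQa]
  have key : Tendsto (fun w : ℝ => ∑ a, π₀ a * Real.exp ((Q a - M)/w)) (𝓝[>] 0)
      (𝓝 (∑ a ∈ Finset.univ.filter (fun a => Q a = M), π₀ a)) := by
    rw [Finset.sum_filter]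
    apply tendsto_finset_sum
    intro a _
    by_cases h : Q a = M
    · simp only [h, sub_self, zero_div, Real.exp_zero, mul_one, if_pos]
      exact tendsto_const_nhds
    · have hle : Q a ≤ M := hM ▸ Finset.le_sup' Q (Finset.mem_univ a)
      have hlt : Q a - M < 0 := sub_neg.mpr (lt_of_le_of_ne hle h)
      have h1 : Tendsto (fun w : ℝ => (Q a - M)/w) (𝓝[>] 0) atBot := by
        have := tendsto_inv_nhdsGT_zero.const_mul_atTop_of_neg hlt
        simpa [div_eq_mul_inv] using this
      have h2 : Tendsto (fun w : ℝ => π₀ a * Real.exp ((Q a - M)/w)) (𝓝[>] 0) (𝓝 (π₀ a * 0)) :=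
        (Real.tendsto_exp_atBot.comp h1).const_mul _
      simpa [h] using h2
  have hcomp := (Real.continuousAt_log (ne_of_gt hS)).tendsto.comp key
  refine hcomp.congr' ?_
  filter_upwards [self_mem_nhdsWithin] with w hw
  have hw0 : (0:ℝ) < w := hw
  have hpos : (0:ℝ) < ∑ a, π₀ a * Real.exp (Q a / w) :=
    Finset.sum_pos (fun a _ => mul_pos (hπpos a) (Real.exp_pos _)) Finset.univ_nonempty
  have heq : (fun w : ℝ => ∑ a, π₀ a * Real.exp ((Q a - M)/w)) w
      = (∑ a, π₀ a * Real.exp (Q a / w)) * Real.exp (-M/w) := by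
    rw [Finset.sum_mul]
    refine Finset.sum_congr rfl fun a _ => ?_
    rw [mul_assoc, ← Real.exp_add, sub_div, neg_div, sub_eq_add_neg]
  simp only [Function.comp_apply, heq,
    Real.log_mul (ne_of_gt hpos) (Real.exp_ne_zero _), Real.log_exp]
  field_simp
  ring
end
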